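/- Let M be a symmetric r×r real matrix with nonnegative diagonal entries and strictly negative off-diagonal entries. Then the quantity Λ(M) = sup over strictly positive vectors v of min over coordinates s of (Mv)_s / v_s equals the smallest eigenvalue of M. -/

import Mathlib

open scoped BigOperators

open Matrix

section Aux

variable {r : ℕ}

private lemma aux_repr_mulVec (M : Matrix (Fin r) (Fin r) ℝ) (hM : M.IsHermitian)
    (x : Fin r → ℝ) (i : Fin r) :
    hM.eigenvectorBasis.repr ((WithLp.equiv 2 (Fin r → ℝ)).symm (M *ᵥ x)) i
      = hM.eigenvalues i * hM.eigenvectorBasis.repr ((WithLp.equiv 2 (Fin r → ℝ)).symm x) i := by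
  rw [OrthonormalBasis.repr_apply_apply, OrthonormalBasis.repr_apply_apply]
  have h1 : ∀ y : Fin r → ℝ, (inner ℝ (hM.eigenvectorBasis i)
        ((WithLp.equiv 2 (Fin r → ℝ)).symm y) : ℝ)
      = (⇑(hM.eigenvectorBasis i) : Fin r → ℝ) ⬝ᵥ y := fun y => by
    simp [PiLp.inner_apply, dotProduct, mul_comm]
  rw [h1, h1, Matrix.dotProduct_mulVec, ← Matrix.mulVec_transpose]
  have ht : Mᵀ = M := by
    have h := hM
    rwa [Matrix.IsHermitian, Matrix.conjTranspose_eq_transpose_of_trivial] at h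
  rw [ht, hM.mulVec_eigenvectorBasis, smul_dotProduct, smul_eq_mul]

private lemma aux_quad (M : Matrix (Fin r) (Fin r) ℝ) (hM : M.IsHermitian) (x : Fin r → ℝ) :
    x ⬝ᵥ (M *ᵥ x) = ∑ i, hM.eigenvalues i
      * (hM.eigenvectorBasis.repr ((WithLp.equiv 2 (Fin r → ℝ)).symm x) i) ^ 2 := by
  have h0 : x ⬝ᵥ (M *ᵥ x) = (inner ℝ ((WithLp.equiv 2 (Fin r → ℝ)).symm x)
      ((WithLp.equiv 2 (Fin r → ℝ)).symm (M *ᵥ x)) : ℝ) := by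
    simp [PiLp.inner_apply, dotProduct, mul_comm]
  rw [h0, ← (hM.eigenvectorBasis.repr).inner_map_map]
  have h2 : ∀ a b : EuclideanSpace ℝ (Fin r), (inner ℝ a b : ℝ) = ∑ i, a i * b i := fun a b => by
    simp [PiLp.inner_apply, mul_comm]
  rw [h2]
  refine Finset.sum_congr rfl fun i _ => ?_
  rw [aux_repr_mulVec M hM x i]
  ring

private lemma aux_sq (M : Matrix (Fin r) (Fin r) ℝ) (hM : M.IsHermitian) (x : Fin r → ℝ) :
    x ⬝ᵥ x = ∑ i, (hM.eigenvectorBasis.repr ((WithLp.equiv 2 (Fin r → ℝ)).symm x) i) ^ 2 := by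
  have h0 : x ⬝ᵥ x = (inner ℝ ((WithLp.equiv 2 (Fin r → ℝ)).symm x)
      ((WithLp.equiv 2 (Fin r → ℝ)).symm x) : ℝ) := rfl
  rw [h0, ← (hM.eigenvectorBasis.repr).inner_map_map]
  have h2 : ∀ a b : EuclideanSpace ℝ (Fin r), (inner ℝ a b : ℝ) = ∑ i, a i * b i := fun a b => by
    simp [PiLp.inner_apply, mul_comm]
  rw [h2]
  exact Finset.sum_congr rfl fun i _ => by ring

private lemma aux_rayleigh (M : Matrix (Fin r) (Fin r) ℝ) (hM : M.IsHermitian) (lam : ℝ)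
    (hmin : ∀ i, lam ≤ hM.eigenvalues i) (x : Fin r → ℝ) :
    lam * (x ⬝ᵥ x) ≤ x ⬝ᵥ (M *ᵥ x) := by
  rw [aux_quad M hM x, aux_sq M hM x, Finset.mul_sum]
  refine Finset.sum_le_sum fun i _ => ?_
  have := hmin i
  nlinarith [sq_nonneg (hM.eigenvectorBasis.repr ((WithLp.equiv 2 (Fin r → ℝ)).symm x) i)]

private lemma aux_eigvec (M : Matrix (Fin r) (Fin r) ℝ) (hM : M.IsHermitian) (lam : ℝ)
    (hmin : ∀ i, lam ≤ hM.eigenvalues i) (x : Fin r → ℝ)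
    (heq : x ⬝ᵥ (M *ᵥ x) = lam * (x ⬝ᵥ x)) : M *ᵥ x = lam • x := by
  set B := hM.eigenvectorBasis with hB
  set X := (WithLp.equiv 2 (Fin r → ℝ)).symm x with hX
  have hsum0 : ∑ i, (hM.eigenvalues i - lam) * (B.repr X i) ^ 2 = 0 := by
    have h1 := aux_quad M hM x
    have h2 := aux_sq M hM x
    have h3 : ∑ i, (hM.eigenvalues i - lam) * (B.repr X i) ^ 2
        = (∑ i, hM.eigenvalues i * (B.repr X i) ^ 2) - lam * ∑ i, (B.repr X i) ^ 2 := by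
      rw [Finset.mul_sum, ← Finset.sum_sub_distrib]
      exact Finset.sum_congr rfl fun i _ => by ring
    rw [h3, ← h1, ← h2, heq, sub_self]
  have hterm : ∀ i ∈ Finset.univ, (0:ℝ) ≤ (hM.eigenvalues i - lam) * (B.repr X i) ^ 2 :=
    fun i _ => mul_nonneg (by linarith [hmin i]) (sq_nonneg _)
  have hrepr : ∀ i, hM.eigenvalues i * B.repr X i = lam * B.repr X i := by
    intro i
    have hz := (Finset.sum_eq_zero_iff_of_nonneg hterm).mp hsum0 i (Finset.mem_univ i)
    rcases mul_eq_zero.mp hz with h | h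
    · have : hM.eigenvalues i = lam := by linarith [sub_eq_zero.mp h]
      rw [this]
    · rw [pow_eq_zero_iff two_ne_zero] at h
      rw [h, mul_zero, mul_zero]
  have key : B.repr ((WithLp.equiv 2 (Fin r → ℝ)).symm (M *ᵥ x))
      = B.repr ((WithLp.equiv 2 (Fin r → ℝ)).symm (lam • x)) := by
    ext i
    rw [aux_repr_mulVec M hM x i]
    have hsm : (WithLp.equiv 2 (Fin r → ℝ)).symm (lam • x) = lam • X := rfl
    rw [hsm, _root_.map_smul]
    exact hrepr i
  exact (WithLp.equiv 2 (Fin r → ℝ)).symm.injective (B.repr.injective key)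

end Aux

/-- Proposition: for a symmetric `r × r` real matrix `M` with nonnegative diagonal
entries and strictly negative off-diagonal entries, the quantity
`Λ(M) = sup_{v > 0} min_s (Mv)_s / v_s` equals the smallest eigenvalue of `M`. -/
theorem stmt_0 (r : ℕ) (hr : 0 < r) (M : Matrix (Fin r) (Fin r) ℝ)
    (hM : M.IsHermitian)
    (hdiag : ∀ i, 0 ≤ M i i)
    (hoff : ∀ i j, i ≠ j → M i j < 0) :
    (⨆ v : {v : Fin r → ℝ // ∀ i, 0 < v i}, ⨅ s, M.mulVec v.1 s / v.1 s)
      = ⨅ i, hM.eigenvalues i := by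
  haveI : Nonempty (Fin r) := ⟨⟨0, hr⟩⟩
  obtain ⟨i₀, hi₀⟩ := Finite.exists_min hM.eigenvalues
  set lam := hM.eigenvalues i₀ with hlam
  have hInf : ⨅ i, hM.eigenvalues i = lam :=
    le_antisymm (ciInf_le (Finite.bddBelow_range _) i₀) (le_ciInf hi₀)
  rw [hInf]
  set B := hM.eigenvectorBasis with hB
  set uf : Fin r → ℝ := fun i => B i₀ i with huf
  have hMu : M *ᵥ uf = lam • uf := hM.mulVec_eigenvectorBasis i₀
  set w : Fin r → ℝ := fun i => |uf i| with hw
  have hwnn : ∀ i, 0 ≤ w i := fun i => abs_nonneg _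
  have huu : uf ⬝ᵥ uf = 1 := by
    have h0 : uf ⬝ᵥ uf = (inner ℝ (B i₀) (B i₀) : ℝ) := rfl
    have hn : ‖B i₀‖ = 1 := B.orthonormal.1 i₀
    rw [h0, real_inner_self_eq_norm_sq, hn]; norm_num
  have hww : w ⬝ᵥ w = 1 := by
    rw [← huu]
    exact Finset.sum_congr rfl fun i _ => abs_mul_abs_self _
  -- Rayleigh lower bound at w
  have hray : lam * (w ⬝ᵥ w) ≤ w ⬝ᵥ (M *ᵥ w) := aux_rayleigh M hM lam hi₀ w
  -- comparison with uf
  have hexp : ∀ x : Fin r → ℝ, x ⬝ᵥ (M *ᵥ x)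
      = ∑ i, ∑ j, x i * M i j * x j := by
    intro x
    simp only [dotProduct, Matrix.mulVec, Finset.mul_sum]
    exact Finset.sum_congr rfl fun i _ => Finset.sum_congr rfl fun j _ => by ring
  have hcomp : w ⬝ᵥ (M *ᵥ w) ≤ uf ⬝ᵥ (M *ᵥ uf) := by
    rw [hexp, hexp]
    refine Finset.sum_le_sum fun i _ => Finset.sum_le_sum fun j _ => ?_
    by_cases hij : i = j
    · subst hij
      have h1 : w i * M i i * w i = M i i * (uf i * uf i) := by
        rw [hw]; simp only
        rw [show |uf i| * M i i * |uf i| = M i i * (|uf i| * |uf i|) by ring,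
          abs_mul_abs_self]
      rw [h1]; nlinarith [hdiag i]
    · have hM' := hoff i j hij
      have h1 : uf i * uf j ≤ |uf i| * |uf j| := by
        calc uf i * uf j ≤ |uf i * uf j| := le_abs_self _
        _ = |uf i| * |uf j| := abs_mul _ _
      have h2 : w i * M i j * w j = M i j * (|uf i| * |uf j|) := by rw [hw]; ring
      have h3 : uf i * M i j * uf j = M i j * (uf i * uf j) := by ring
      rw [h2, h3]
      exact mul_le_mul_of_nonpos_left h1 (le_of_lt hM')
  have huMu : uf ⬝ᵥ (M *ᵥ uf) = lam := by
    rw [hMu, dotProduct_smul, smul_eq_mul, huu, mul_one]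
  -- equality case: w is an eigenvector
  have hwMw : w ⬝ᵥ (M *ᵥ w) = lam * (w ⬝ᵥ w) := by
    rw [hww, mul_one]
    refine le_antisymm (le_of_le_of_eq hcomp huMu) ?_
    calc lam = lam * (w ⬝ᵥ w) := by rw [hww, mul_one]
    _ ≤ _ := hray
  have hMw : M *ᵥ w = lam • w := aux_eigvec M hM lam hi₀ w hwMw
  -- strict positivity of w
  have hwpos : ∀ i, 0 < w i := by
    intro i
    rcases lt_or_eq_of_le (hwnn i) with h | h
    · exact h
    exfalso
    have hwi : w i = 0 := h.symm
    have hall : ∀ j, w j = 0 := by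
      intro j
      by_cases hji : j = i
      · rw [hji]; exact hwi
      have hsum : ∑ j, M i j * w j = 0 := by
        have h1 := congrFun hMw i
        simp only [Matrix.mulVec, dotProduct, Pi.smul_apply, smul_eq_mul] at h1
        rw [h1, hwi, mul_zero]
      have hterm : ∀ j ∈ Finset.univ, M i j * w j ≤ 0 := by
        intro j _
        by_cases hj : j = i
        · subst hj; rw [hwi, mul_zero]
        · exact mul_nonpos_of_nonpos_of_nonneg (le_of_lt (hoff i j (Ne.symm hj))) (hwnn j)
      have hz := (Finset.sum_eq_zero_iff_of_nonpos hterm).mp hsum j (Finset.mem_univ j)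
      have hMij : M i j ≠ 0 := ne_of_lt (hoff i j (Ne.symm hji))
      exact (mul_eq_zero.mp hz).resolve_left hMij
    have hzero : w ⬝ᵥ w = 0 :=
      Finset.sum_eq_zero fun j _ => by rw [hall j, mul_zero]
    rw [hww] at hzero; exact one_ne_zero hzero
  -- upper bound for every positive v
  have hub : ∀ v : {v : Fin r → ℝ // ∀ i, 0 < v i},
      (⨅ s, M.mulVec v.1 s / v.1 s) ≤ lam := by
    rintro ⟨v, hv⟩
    set m := ⨅ s, M.mulVec v s / v s with hm
    have hms : ∀ s, m * v s ≤ (M *ᵥ v) s := by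
      intro s
      have h1 : m ≤ (M *ᵥ v) s / v s := ciInf_le (Finite.bddBelow_range _) s
      exact (le_div_iff₀ (hv s)).mp h1
    have hwv : 0 < w ⬝ᵥ v :=
      Finset.sum_pos (fun s _ => mul_pos (hwpos s) (hv s)) ⟨⟨0, hr⟩, Finset.mem_univ _⟩
    have key : m * (w ⬝ᵥ v) ≤ lam * (w ⬝ᵥ v) := by
      have h1 : m * (w ⬝ᵥ v) ≤ w ⬝ᵥ (M *ᵥ v) := by
        rw [dotProduct, Finset.mul_sum, dotProduct]
        refine Finset.sum_le_sum fun s _ => ?_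
        calc m * (w s * v s) = w s * (m * v s) := by ring
        _ ≤ w s * (M *ᵥ v) s := mul_le_mul_of_nonneg_left (hms s) (hwnn s)
      have ht : Mᵀ = M := by
        have h := hM
        rwa [Matrix.IsHermitian, Matrix.conjTranspose_eq_transpose_of_trivial] at h
      have h2 : w ⬝ᵥ (M *ᵥ v) = lam * (w ⬝ᵥ v) := by
        rw [Matrix.dotProduct_mulVec, ← Matrix.mulVec_transpose, ht,
          hMw, smul_dotProduct, smul_eq_mul]
      rw [← h2]; exact h1
    exact le_of_mul_le_mul_right key hwv
  -- value at w
  have hval : (⨅ s, M.mulVec w s / w s) = lam := by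
    have hv : ∀ s, M.mulVec w s / w s = lam := by
      intro s
      have h1 := congrFun hMw s
      rw [show (M *ᵥ w) s = M.mulVec w s from rfl] at h1
      rw [h1, Pi.smul_apply, smul_eq_mul, mul_div_assoc, div_self (ne_of_gt (hwpos s)), mul_one]
    simp only [hv, ciInf_const]
  haveI : Nonempty {v : Fin r → ℝ // ∀ i, 0 < v i} := ⟨⟨fun _ => 1, fun _ => one_pos⟩⟩
  refine le_antisymm (ciSup_le hub) ?_
  have hbdd : BddAbove (Set.range fun v : {v : Fin r → ℝ // ∀ i, 0 < v i} =>
      ⨅ s, M.mulVec v.1 s / v.1 s) := ⟨lam, by rintro x ⟨v, rfl⟩; exact hub v⟩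
  calc lam = ⨅ s, M.mulVec w s / w s := hval.symm
  _ ≤ _ := le_ciSup hbdd ⟨w, hwpos⟩
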